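/- Let f = f_s + φ where f_s is differentiable with L-Lipschitz gradient and φ is bounded: |φ(z)| ≤ ε for all z. If x is a point where stencil failure occurs on the coordinate stencil with size h > 0, then ‖∇f_s(x)‖_2 ≤ √n (L h/2 + 2ε/h). In particular, choosing h = 2√(ε/L) yields ‖∇f_s(x)‖_2 ≤ 2√n √(L ε). -/

import Mathlib

open InnerProductSpace

/-- Descent lemma: if the gradient of `fs` is `L`-Lipschitz, then
`fs (x + d) ≤ fs x + ⟪g x, d⟫ + L/2 ‖d‖²`. -/
lemma descent_lemma {F : Type*} [NormedAddCommGroup F] [InnerProductSpace ℝ F]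
    [CompleteSpace F]
    (fs : F → ℝ) (g : F → F) (hg : ∀ x, HasGradientAt fs (g x) x)
    (L : ℝ) (hL0 : 0 ≤ L) (hL : ∀ y z, ‖g y - g z‖ ≤ L * ‖y - z‖)
    (x d : F) :
    fs (x + d) ≤ fs x + (inner ℝ (g x) d : ℝ) + L / 2 * ‖d‖ ^ 2 := by
  set c : ℝ := (inner ℝ (g x) d : ℝ) with hc
  set F1 : ℝ → ℝ := fun t => fs (x + t • d) - t * c - L / 2 * ‖d‖ ^ 2 * t ^ 2 with hF1def
  have hψ : ∀ t : ℝ, HasDerivAt (fun t : ℝ => fs (x + t • d))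
      ((inner ℝ (g (x + t • d)) d : ℝ)) t := by
    intro t
    have h1 : HasDerivAt (fun t : ℝ => x + t • d) d t := by
      simpa using ((hasDerivAt_id t).smul_const d).const_add x
    have h2 : HasFDerivAt fs (toDual ℝ F (g (x + t • d))) (x + t • d) :=
      (hg _).hasFDerivAt
    simpa [toDual_apply_apply, Function.comp_def] using h2.comp_hasDerivAt t h1
  have hF1 : ∀ t : ℝ, HasDerivAt F1
      ((inner ℝ (g (x + t • d)) d : ℝ) - c - L / 2 * ‖d‖ ^ 2 * (2 * t)) t := by
    intro t
    have := (((hψ t).sub ((hasDerivAt_id t).mul_const c)).sub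
      ((hasDerivAt_pow 2 t).const_mul (L / 2 * ‖d‖ ^ 2)))
    refine this.congr_deriv ?_
    ring
  have hanti : AntitoneOn F1 (Set.Icc 0 1) := by
    apply antitoneOn_of_deriv_nonpos (convex_Icc 0 1)
    · exact fun t _ => ((hF1 t).continuousAt).continuousWithinAt
    · exact fun t _ => (hF1 t).differentiableAt.differentiableWithinAt
    · intro t ht
      rw [interior_Icc] at ht
      rw [(hF1 t).deriv]
      have h3 : (inner ℝ (g (x + t • d)) d : ℝ) - c ≤ L * t * ‖d‖ ^ 2 := by
        have h4 : (inner ℝ (g (x + t • d)) d : ℝ) - c = inner ℝ (g (x + t • d) - g x) d := by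
          rw [inner_sub_left]
        rw [h4]
        calc (inner ℝ (g (x + t • d) - g x) d : ℝ) ≤ ‖g (x + t • d) - g x‖ * ‖d‖ :=
              real_inner_le_norm _ _
          _ ≤ (L * ‖(x + t • d) - x‖) * ‖d‖ := by
              apply mul_le_mul_of_nonneg_right (hL _ _) (norm_nonneg _)
          _ = L * t * ‖d‖ ^ 2 := by
              simp only [add_sub_cancel_left, norm_smul, Real.norm_eq_abs,
                abs_of_pos ht.1]
              ring
      nlinarith [sq_nonneg ‖d‖, ht.1.le]
  have key := hanti (Set.mem_Icc.2 ⟨le_refl 0, zero_le_one⟩)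
    (Set.mem_Icc.2 ⟨zero_le_one, le_refl 1⟩) zero_le_one
  simp only [hF1def, zero_smul, add_zero, one_smul, zero_mul, zero_pow, mul_zero, sub_zero,
    one_pow, mul_one, one_mul] at key
  linarith

theorem stencil_failure_bounded_noise {n : ℕ}
    (fs φ : EuclideanSpace ℝ (Fin n) → ℝ)
    (g : EuclideanSpace ℝ (Fin n) → EuclideanSpace ℝ (Fin n))
    (hg : ∀ x, HasGradientAt fs (g x) x)
    (L : ℝ) (hLpos : 0 < L) (hL : ∀ y z, ‖g y - g z‖ ≤ L * ‖y - z‖)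
    (ε : ℝ) (hε : 0 < ε) (hφ : ∀ z, |φ z| ≤ ε)
    (x : EuclideanSpace ℝ (Fin n)) (h : ℝ) (hh : 0 < h)
    (hfail : ∀ i : Fin n,
      fs (x + h • EuclideanSpace.single i (1 : ℝ)) + φ (x + h • EuclideanSpace.single i (1 : ℝ))
        ≥ fs x + φ x ∧
      fs (x - h • EuclideanSpace.single i (1 : ℝ)) + φ (x - h • EuclideanSpace.single i (1 : ℝ))
        ≥ fs x + φ x) :
    ‖g x‖ ≤ Real.sqrt n * (L * h / 2 + 2 * ε / h) ∧
    (h = 2 * Real.sqrt (ε / L) → ‖g x‖ ≤ 2 * Real.sqrt n * Real.sqrt (L * ε)) := by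
  set M : ℝ := L * h / 2 + 2 * ε / h with hM
  have hM0 : 0 ≤ M := by positivity
  -- coordinatewise bound
  have hcoord : ∀ i : Fin n, |g x i| ≤ M := by
    intro i
    set e : EuclideanSpace ℝ (Fin n) := EuclideanSpace.single i (1 : ℝ) with he
    have hne : ‖h • e‖ = h := by
      rw [norm_smul, Real.norm_eq_abs, abs_of_pos hh, EuclideanSpace.norm_single]
      simp
    have hip : (inner ℝ (g x) (h • e) : ℝ) = h * g x i := by
      rw [real_inner_smul_right, he, EuclideanSpace.inner_single_right]
      simp
    have hnoise : ∀ z w : EuclideanSpace ℝ (Fin n),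
        fs z + φ z ≥ fs w + φ w → fs z ≥ fs w - 2 * ε := by
      intro z w hzw
      have h1 := abs_le.1 (hφ z)
      have h2 := abs_le.1 (hφ w)
      linarith
    have hplus := hnoise _ _ (hfail i).1
    have hminus := hnoise _ _ (hfail i).2
    have hd1 := descent_lemma fs g hg L hLpos.le hL x (h • e)
    have hd2 := descent_lemma fs g hg L hLpos.le hL x (-(h • e))
    rw [hip, hne] at hd1
    rw [inner_neg_right, hip, norm_neg, hne] at hd2
    rw [← sub_eq_add_neg] at hd2
    -- from hplus, hd1 : fs x - 2ε ≤ fs x + h * g x i + L/2 h²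
    have hub : g x i ≤ M := by
      have : fs x - 2 * ε ≤ fs x + -(h * g x i) + L / 2 * h ^ 2 := le_trans hminus hd2
      rw [hM]
      rw [div_add_div _ _ (two_ne_zero) (ne_of_gt hh), le_div_iff₀ (by positivity)]
      nlinarith
    have hlb : -M ≤ g x i := by
      have h1 : fs x - 2 * ε ≤ fs x + (h * g x i) + L / 2 * h ^ 2 := le_trans hplus hd1
      have hMh : -M = (-(L * h ^ 2 / 2 + 2 * ε)) / h := by
        rw [hM]; field_simp
      rw [hMh, div_le_iff₀ hh]
      nlinarith
    exact abs_le.2 ⟨hlb, hub⟩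
  -- norm bound
  have hnorm : ‖g x‖ ≤ Real.sqrt n * M := by
    rw [EuclideanSpace.norm_eq]
    have hsum : ∑ i, ‖g x i‖ ^ 2 ≤ (n : ℝ) * M ^ 2 := by
      calc ∑ i, ‖g x i‖ ^ 2 ≤ ∑ _i : Fin n, M ^ 2 := by
            apply Finset.sum_le_sum
            intro i _
            rw [Real.norm_eq_abs]
            exact pow_le_pow_left₀ (abs_nonneg _) (hcoord i) 2
        _ = (n : ℝ) * M ^ 2 := by simp [Finset.sum_const]
    calc Real.sqrt (∑ i, ‖g x i‖ ^ 2) ≤ Real.sqrt ((n : ℝ) * M ^ 2) :=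
          Real.sqrt_le_sqrt hsum
      _ = Real.sqrt n * M := by
          rw [Real.sqrt_mul (Nat.cast_nonneg n), Real.sqrt_sq hM0]
  refine ⟨hnorm, fun hhval => ?_⟩
  -- special h
  have hs : Real.sqrt (ε / L) > 0 := Real.sqrt_pos.2 (by positivity)
  have hs2 : Real.sqrt (ε / L) ^ 2 = ε / L := Real.sq_sqrt (by positivity)
  have hε' : L * Real.sqrt (ε / L) ^ 2 = ε := by
    rw [hs2]; field_simp
  have key : (L * Real.sqrt (ε / L)) ^ 2 = L * ε := by
    linear_combination L * hε'
  have hLε : Real.sqrt (L * ε) = L * Real.sqrt (ε / L) := by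
    rw [← key, Real.sqrt_sq (by positivity)]
  have h1 : L * h / 2 = L * Real.sqrt (ε / L) := by rw [hhval]; ring
  have h2 : 2 * ε / h = L * Real.sqrt (ε / L) := by
    rw [hhval, div_eq_iff (by positivity)]
    linear_combination (-2 : ℝ) * hε'
  have hMval : M = 2 * Real.sqrt (L * ε) := by
    rw [hM, h1, h2, hLε]; ring
  calc ‖g x‖ ≤ Real.sqrt n * M := hnorm
    _ = 2 * Real.sqrt n * Real.sqrt (L * ε) := by rw [hMval]; ring
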